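/- Let S be a sparse collection in a filtered measure space and 𝖲f = Σ_{P∈S}⟨f⟩_P 1_P. Then 𝖲 satisfies the weak (1,1) bound: λ μ({𝖲f > λ}) ≤ C ‖f‖_{L^1(μ)} for all λ > 0 and nonnegative f ∈ L^1(μ), with an absolute constant C. -/

import Mathlib

open MeasureTheory
open scoped ENNReal NNReal

/-- A filtered structure on a measure space: for each `n ∈ ℤ`, a countable partition
`part n` of `Ω` into measurable sets of finite positive measure, with `part (n+1)`
refining `part n`. -/
structure MartingaleGrid (Ω : Type*) [MeasurableSpace Ω] (μ : Measure Ω) where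
  part : ℤ → Set (Set Ω)
  countable : ∀ n, (part n).Countable
  measurableSet : ∀ n, ∀ Q ∈ part n, MeasurableSet Q
  pos : ∀ n, ∀ Q ∈ part n, 0 < μ Q
  fin : ∀ n, ∀ Q ∈ part n, μ Q < ⊤
  disjoint : ∀ n, (part n).PairwiseDisjoint id
  cover : ∀ n, ⋃₀ part n = Set.univ
  refines : ∀ n, ∀ Q ∈ part (n + 1), ∃ P ∈ part n, Q ⊆ P

variable {Ω : Type*} [MeasurableSpace Ω] {μ : MeasureTheory.Measure Ω}

/-- The tree `𝒬 = ⋃ₙ 𝒬ₙ` of all partition sets. -/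
def MartingaleGrid.tree (G : MartingaleGrid Ω μ) : Set (Set Ω) :=
  ⋃ n : ℤ, G.part n

/-- The children of `P`: the maximal elements of the tree strictly contained in `P`. -/
def MartingaleGrid.children (G : MartingaleGrid Ω μ) (P : Set Ω) : Set (Set Ω) :=
  {Q | Q ∈ G.tree ∧ Q ⊂ P ∧ ∀ R ∈ G.tree, Q ⊆ R → R ⊂ P → R = Q}

/-- The martingale difference `Δ_P f = Σ_{Q child of P} 1_Q (⟨f⟩_Q − ⟨f⟩_P)`. -/
noncomputable def MartingaleGrid.mdiff (G : MartingaleGrid Ω μ) (P : Set Ω)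
    (f : Ω → ℝ) (x : Ω) : ℝ :=
  ∑' Q : G.children P,
    Set.indicator (Q : Set Ω)
      (fun _ => (⨍ y in (Q : Set Ω), f y ∂μ) - ⨍ y in P, f y ∂μ) x

/-- The `S`-children of `P`: the maximal elements of `S` strictly contained in `P`. -/
def sparseChildren (S : Set (Set Ω)) (P : Set Ω) : Set (Set Ω) :=
  {Q | Q ∈ S ∧ Q ⊂ P ∧ ∀ R ∈ S, Q ⊆ R → R ⊂ P → R = Q}

/-- A collection `S` is sparse for `μ` if for each `P ∈ S` the `S`-children of `P`
have total measure at most `μ(P)/2`. -/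
def IsSparseIn (μ : Measure Ω) (S : Set (Set Ω)) : Prop :=
  ∀ P ∈ S, ∑' Q : sparseChildren S P, μ (Q : Set Ω) ≤ μ P / 2

namespace SparseWeak11Aux

attribute [local instance] Classical.propDecidable

variable (G : MartingaleGrid Ω μ)

lemma mem_tree_iff {P : Set Ω} : P ∈ G.tree ↔ ∃ n, P ∈ G.part n := by
  simp [MartingaleGrid.tree]

lemma tree_measurableSet {P : Set Ω} (h : P ∈ G.tree) : MeasurableSet P := by
  obtain ⟨n, hn⟩ := (mem_tree_iff G).1 h
  exact G.measurableSet n P hn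

lemma tree_pos {P : Set Ω} (h : P ∈ G.tree) : 0 < μ P := by
  obtain ⟨n, hn⟩ := (mem_tree_iff G).1 h
  exact G.pos n P hn

lemma tree_ne_top {P : Set Ω} (h : P ∈ G.tree) : μ P ≠ ⊤ := by
  obtain ⟨n, hn⟩ := (mem_tree_iff G).1 h
  exact (G.fin n P hn).ne

lemma tree_nonempty {P : Set Ω} (h : P ∈ G.tree) : P.Nonempty :=
  nonempty_of_measure_ne_zero (tree_pos G h).ne'

lemma refines_le {a b : ℤ} (hab : a ≤ b) {R : Set Ω} (hR : R ∈ G.part b) :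
    ∃ P ∈ G.part a, R ⊆ P := by
  obtain ⟨k, rfl⟩ := Int.le.dest hab
  clear hab
  induction k generalizing R with
  | zero => exact ⟨R, by simpa using hR, subset_rfl⟩
  | succ k ih =>
    have hR' : R ∈ G.part ((a + k) + 1) := by
      have : (a + (↑(k+1) : ℤ)) = (a + k) + 1 := by push_cast; ring
      rwa [this] at hR
    obtain ⟨Q, hQ, hRQ⟩ := G.refines (a + k) R hR'
    obtain ⟨P, hP, hQP⟩ := ih hQ
    exact ⟨P, hP, hRQ.trans hQP⟩

lemma nested_of_not_disjoint {P Q : Set Ω} (hP : P ∈ G.tree) (hQ : Q ∈ G.tree)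
    (h : ¬ Disjoint P Q) : P ⊆ Q ∨ Q ⊆ P := by
  obtain ⟨a, ha⟩ := (mem_tree_iff G).1 hP
  obtain ⟨b, hb⟩ := (mem_tree_iff G).1 hQ
  rcases le_total a b with hab | hab
  · obtain ⟨P', hP', hQP'⟩ := refines_le G hab hb
    rcases eq_or_ne P P' with rfl | hne
    · exact Or.inr hQP'
    · exact absurd ((G.disjoint a ha hP' hne).mono_right hQP') h
  · obtain ⟨Q', hQ', hPQ'⟩ := refines_le G hab ha
    rcases eq_or_ne Q Q' with rfl | hne
    · exact Or.inl hPQ'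
    · exact absurd ((G.disjoint b hb hQ' hne).mono_right hPQ').symm h

lemma level_lt {P Q : Set Ω} {a b : ℤ} (hPa : P ∈ G.part a) (hQb : Q ∈ G.part b)
    (hPQ : P ⊂ Q) : b < a := by
  by_contra hba
  push_neg at hba
  obtain ⟨P', hP', hQP'⟩ := refines_le G hba hQb
  have hPP' : P = P' := by
    by_contra hne
    have hd := G.disjoint a hPa hP' hne
    have hPne := tree_nonempty G ((mem_tree_iff G).2 ⟨a, hPa⟩)
    obtain ⟨x, hx⟩ := hPne
    exact Set.disjoint_left.1 hd hx (hQP' (hPQ.1 hx))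
  exact hPQ.not_subset (hPP' ▸ hQP')

noncomputable def lvl (G : MartingaleGrid Ω μ) (P : Set Ω) : ℤ :=
  if h : P ∈ G.tree then ((mem_tree_iff G).1 h).choose else 0

lemma lvl_mem {P : Set Ω} (h : P ∈ G.tree) : P ∈ G.part (lvl G P) := by
  rw [lvl, dif_pos h]
  exact ((mem_tree_iff G).1 h).choose_spec

lemma lvl_lt {P Q : Set Ω} (hP : P ∈ G.tree) (hQ : Q ∈ G.tree) (h : P ⊂ Q) :
    lvl G Q < lvl G P :=
  level_lt G (lvl_mem G hP) (lvl_mem G hQ) h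

lemma exists_child {S : Set (Set Ω)} (hSG : S ⊆ G.tree) {P Q : Set Ω}
    (hP : P ∈ S) (hQ : Q ∈ S) (hQP : Q ⊂ P) :
    ∃ c, c ∈ sparseChildren S P ∧ Q ⊆ c := by
  set C : Set (Set Ω) := {R | R ∈ S ∧ Q ⊆ R ∧ R ⊂ P} with hCdef
  have hQne : Q.Nonempty := tree_nonempty G (hSG hQ)
  have hQC : Q ∈ C := ⟨hQ, subset_rfl, hQP⟩
  have hnested : ∀ R ∈ C, ∀ R' ∈ C, R ⊆ R' ∨ R' ⊆ R := by
    rintro R ⟨hRS, hQR, -⟩ R' ⟨hRS', hQR', -⟩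
    refine nested_of_not_disjoint G (hSG hRS) (hSG hRS') ?_
    obtain ⟨x, hx⟩ := hQne
    exact fun hd => Set.disjoint_left.1 hd (hQR hx) (hQR' hx)
  have hfin : C.Finite := by
    apply Set.Finite.of_finite_image (f := lvl G)
    · apply (Set.finite_Ioc (lvl G P) (lvl G Q)).subset
      rintro _ ⟨R, ⟨hRS, hQR, hRP⟩, rfl⟩
      refine ⟨lvl_lt G (hSG hRS) (hSG hP) hRP, ?_⟩
      rcases eq_or_ne Q R with rfl | hne
      · exact le_rfl
      · exact (lvl_lt G (hSG hQ) (hSG hRS) (ssubset_of_subset_of_ne hQR hne)).le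
    · rintro R hR R' hR' hlvl
      by_contra hne
      rcases hnested R hR R' hR' with hsub | hsub
      · have := lvl_lt G (hSG hR.1) (hSG hR'.1) (ssubset_of_subset_of_ne hsub hne)
        omega
      · have := lvl_lt G (hSG hR'.1) (hSG hR.1) (ssubset_of_subset_of_ne hsub (Ne.symm hne))
        omega
  obtain ⟨c, hcC, hmax⟩ := Set.Finite.exists_maximalFor id C hfin ⟨Q, hQC⟩
  refine ⟨c, ⟨hcC.1, hcC.2.2, ?_⟩, hcC.2.1⟩
  intro R hRS hcR hRP
  exact Set.Subset.antisymm (hmax ⟨hRS, hcC.2.1.trans hcR, hRP⟩ hcR) hcR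


-- ########## star bound ##########

lemma star_bound {S : Set (Set Ω)} (hSG : S ⊆ G.tree) (hSp : IsSparseIn μ S)
    {P : Set Ω} (hP : P ∈ S) (𝒟 : Finset (Set Ω))
    (h1 : ∀ Q ∈ 𝒟, Q ∈ S ∧ Q ⊂ P)
    (h2 : (𝒟 : Set (Set Ω)).PairwiseDisjoint id) :
    ∑ Q ∈ 𝒟, μ Q ≤ μ P / 2 := by
  have hch : ∀ Q ∈ 𝒟, ∃ c, c ∈ sparseChildren S P ∧ Q ⊆ c := fun Q hQ =>
    exists_child G hSG hP (h1 Q hQ).1 (h1 Q hQ).2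
  set cf : Set Ω → Set Ω := fun Q =>
    if h : ∃ c, c ∈ sparseChildren S P ∧ Q ⊆ c then h.choose else ∅ with hcf
  have hcf1 : ∀ Q ∈ 𝒟, cf Q ∈ sparseChildren S P ∧ Q ⊆ cf Q := by
    intro Q hQ
    rw [hcf]
    simp only [dif_pos (hch Q hQ)]
    exact (hch Q hQ).choose_spec
  calc ∑ Q ∈ 𝒟, μ Q
      = ∑ c ∈ 𝒟.image cf, ∑ Q ∈ 𝒟.filter (fun Q => cf Q = c), μ Q :=
        (Finset.sum_fiberwise_of_maps_to (fun Q hQ => Finset.mem_image_of_mem cf hQ) _).symm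
    _ ≤ ∑ c ∈ 𝒟.image cf, μ c := by
        refine Finset.sum_le_sum fun c hc => ?_
        obtain ⟨Q0, hQ0, rfl⟩ := Finset.mem_image.1 hc
        have hdisj : ((𝒟.filter (fun Q => cf Q = cf Q0) : Finset (Set Ω)) :
            Set (Set Ω)).PairwiseDisjoint (fun s : Set Ω => s) :=
          h2.subset (Finset.coe_subset.2 (Finset.filter_subset _ _))
        have e := measure_biUnion_finset (μ := μ) hdisj
            (fun Q hQ => tree_measurableSet G (hSG (h1 Q (Finset.mem_filter.1 hQ).1).1))
        refine le_trans (le_of_eq e.symm) (measure_mono ?_)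
        intro x hx
        simp only [Set.mem_iUnion, id] at hx
        obtain ⟨Q, hQ, hxQ⟩ := hx
        have := (Finset.mem_filter.1 hQ).2
        exact this ▸ (hcf1 Q (Finset.mem_filter.1 hQ).1).2 hxQ
    _ ≤ ∑' c : sparseChildren S P, μ (c : Set Ω) := by
        rw [tsum_subtype]
        calc ∑ c ∈ 𝒟.image cf, μ c
            = ∑ c ∈ 𝒟.image cf, (sparseChildren S P).indicator μ c := by
              refine Finset.sum_congr rfl fun c hc => ?_
              obtain ⟨Q0, hQ0, rfl⟩ := Finset.mem_image.1 hc
              exact (Set.indicator_of_mem (hcf1 Q0 hQ0).1 μ).symm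
          _ ≤ _ := ENNReal.sum_le_tsum _
    _ ≤ μ P / 2 := hSp P hP

-- ########## depth machinery ##########

noncomputable def dep (T' : Finset (Set Ω)) (P Q : Set Ω) : ℕ :=
  (T'.filter (fun R => Q ⊂ R ∧ R ⊆ P)).card

lemma dep_lt {T' : Finset (Set Ω)} {P Q Q'' : Set Ω}
    (hQ'' : Q'' ∈ T') (hss : Q ⊂ Q'') (hQ''P : Q'' ⊆ P) :
    dep T' P Q'' < dep T' P Q := by
  apply Finset.card_lt_card
  rw [Finset.ssubset_iff_of_subset]
  · exact ⟨Q'', Finset.mem_filter.2 ⟨hQ'', hss, hQ''P⟩, fun hmem =>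
      ssubset_irrefl Q'' (Finset.mem_filter.1 hmem).2.1⟩
  · intro R hR
    obtain ⟨hRT, hR1, hR2⟩ := Finset.mem_filter.1 hR
    exact Finset.mem_filter.2 ⟨hRT, hss.trans hR1, hR2⟩

lemma depth_class_pairwiseDisjoint {S : Set (Set Ω)} (hSG : S ⊆ G.tree)
    (T' : Finset (Set Ω)) (hT' : ↑T' ⊆ S) (P : Set Ω) (k : ℕ) :
    ((T'.filter fun Q => Q ⊆ P ∧ dep T' P Q = k : Finset (Set Ω)) :
      Set (Set Ω)).PairwiseDisjoint id := by
  intro A hA B hB hne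
  simp only [Finset.coe_filter, Set.mem_setOf_eq] at hA hB
  obtain ⟨hAT, hAP, hAk⟩ := hA
  obtain ⟨hBT, hBP, hBk⟩ := hB
  by_contra hnd
  rcases nested_of_not_disjoint G (hSG (hT' hAT)) (hSG (hT' hBT)) hnd with hsub | hsub
  · have := dep_lt hBT (ssubset_of_subset_of_ne hsub hne) hBP
    omega
  · have := dep_lt hAT (ssubset_of_subset_of_ne hsub (Ne.symm hne)) hAP
    omega

lemma depth_sum {S : Set (Set Ω)} (hSG : S ⊆ G.tree) (hSp : IsSparseIn μ S)
    (T' : Finset (Set Ω)) (hT' : ↑T' ⊆ S) {P : Set Ω} (k : ℕ) :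
    ∑ Q ∈ T'.filter (fun Q => Q ⊆ P ∧ dep T' P Q = k), μ Q ≤ μ P / 2 ^ k := by
  induction k with
  | zero =>
    rw [pow_zero, div_one]
    have hdisj : ((T'.filter (fun Q => Q ⊆ P ∧ dep T' P Q = 0) : Finset (Set Ω)) :
        Set (Set Ω)).PairwiseDisjoint (fun s : Set Ω => s) :=
      depth_class_pairwiseDisjoint G hSG T' hT' P 0
    have e := measure_biUnion_finset (μ := μ) hdisj
        (fun Q hQ => tree_measurableSet G (hSG (hT' (Finset.mem_filter.1 hQ).1)))
    refine le_trans (le_of_eq e.symm) (measure_mono ?_)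
    intro x hx
    simp only [Set.mem_iUnion, id] at hx
    obtain ⟨Q, hQ, hxQ⟩ := hx
    exact (Finset.mem_filter.1 hQ).2.1 hxQ
  | succ k ih =>
    -- parent map
    have hpar : ∀ Q ∈ T'.filter (fun Q => Q ⊆ P ∧ dep T' P Q = k + 1),
        ∃ m, (m ∈ T'.filter (fun Q => Q ⊆ P ∧ dep T' P Q = k)) ∧ Q ⊂ m := by
      intro Q hQf
      obtain ⟨hQT, hQP, hQk⟩ := Finset.mem_filter.1 hQf
      obtain ⟨hQP', hQk'⟩ := And.intro hQP hQk
      have hne : (T'.filter (fun R => Q ⊂ R ∧ R ⊆ P)).Nonempty := by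
        rw [← Finset.card_pos, ← dep]; omega
      obtain ⟨m, hm, hmin⟩ := Finset.exists_minimal hne
      obtain ⟨hmT, hQm, hmP⟩ := Finset.mem_filter.1 hm
      have hQne : Q.Nonempty := tree_nonempty G (hSG (hT' hQT))
      have herase : T'.filter (fun R => m ⊂ R ∧ R ⊆ P)
          = (T'.filter (fun R => Q ⊂ R ∧ R ⊆ P)).erase m := by
        ext R
        simp only [Finset.mem_erase, Finset.mem_filter]
        constructor
        · rintro ⟨hRT, hmR, hRP⟩
          exact ⟨fun h => (h ▸ hmR).false, hRT, hQm.trans hmR, hRP⟩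
        · rintro ⟨hRm, hRT, hQR, hRP⟩
          refine ⟨hRT, ?_, hRP⟩
          have hnd : ¬ Disjoint R m := by
            obtain ⟨x, hx⟩ := hQne
            exact fun hd => Set.disjoint_left.1 hd (hQR.1 hx) (hQm.1 hx)
          rcases nested_of_not_disjoint G (hSG (hT' hRT)) (hSG (hT' hmT)) hnd with hs | hs
          · exact absurd (ssubset_of_subset_of_ne hs hRm)
              (fun h => h.not_subset (hmin (Finset.mem_filter.2 ⟨hRT, hQR, hRP⟩) h.subset))
          · exact ssubset_of_subset_of_ne hs (Ne.symm hRm)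
      have hdepm : dep T' P m = k := by
        have : dep T' P m = dep T' P Q - 1 := by
          rw [dep, herase, Finset.card_erase_of_mem hm, ← dep]
        omega
      exact ⟨m, Finset.mem_filter.2 ⟨hmT, hmP, hdepm⟩, hQm⟩
    set Dk1 := T'.filter (fun Q => Q ⊆ P ∧ dep T' P Q = k + 1) with hDk1
    set Dk := T'.filter (fun Q => Q ⊆ P ∧ dep T' P Q = k) with hDk
    set pf : Set Ω → Set Ω := fun Q =>
      if h : ∃ m, (m ∈ Dk) ∧ Q ⊂ m then h.choose else ∅ with hpf
    have hpf1 : ∀ Q ∈ Dk1, pf Q ∈ Dk ∧ Q ⊂ pf Q := by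
      intro Q hQ
      rw [hpf]
      simp only [dif_pos (hpar Q hQ)]
      exact (hpar Q hQ).choose_spec
    calc ∑ Q ∈ Dk1, μ Q
        = ∑ m ∈ Dk, ∑ Q ∈ Dk1.filter (fun Q => pf Q = m), μ Q :=
          (Finset.sum_fiberwise_of_maps_to (fun Q hQ => (hpf1 Q hQ).1) _).symm
      _ ≤ ∑ m ∈ Dk, μ m / 2 := by
          refine Finset.sum_le_sum fun m hm => ?_
          refine star_bound G hSG hSp (hT' (Finset.mem_filter.1 hm).1) _ ?_ ?_
          · intro Q hQ
            obtain ⟨hQ1, hQ2⟩ := Finset.mem_filter.1 hQ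
            refine ⟨hT' (Finset.mem_filter.1 hQ1).1, hQ2 ▸ (hpf1 Q hQ1).2⟩
          · refine (depth_class_pairwiseDisjoint G hSG T' hT' P (k+1)).subset ?_
            intro x hx
            exact Finset.mem_coe.2 (Finset.mem_filter.1 (Finset.mem_coe.1 hx)).1
      _ = (∑ m ∈ Dk, μ m) * 2⁻¹ := by
          rw [Finset.sum_mul]; simp [div_eq_mul_inv]
      _ ≤ μ P / 2 ^ k * 2⁻¹ := mul_le_mul_left ih 2⁻¹
      _ = μ P / 2 ^ (k + 1) := by
          rw [div_eq_mul_inv, div_eq_mul_inv, mul_assoc, ← ENNReal.mul_inv (by simp) (by simp),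
            pow_succ]

lemma sum_subsets_le {S : Set (Set Ω)} (hSG : S ⊆ G.tree) (hSp : IsSparseIn μ S)
    (T' : Finset (Set Ω)) (hT' : ↑T' ⊆ S) {P : Set Ω} :
    ∑ Q ∈ T'.filter (· ⊆ P), μ Q ≤ 2 * μ P := by
  have hmaps : ∀ Q ∈ T'.filter (· ⊆ P), dep T' P Q ∈ Finset.range (T'.card + 1) := by
    intro Q hQ
    rw [Finset.mem_range]
    have : dep T' P Q ≤ T'.card := Finset.card_filter_le _ _
    omega
  calc ∑ Q ∈ T'.filter (· ⊆ P), μ Q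
      = ∑ k ∈ Finset.range (T'.card + 1),
          ∑ Q ∈ (T'.filter (· ⊆ P)).filter (fun Q => dep T' P Q = k), μ Q :=
        (Finset.sum_fiberwise_of_maps_to hmaps _).symm
    _ ≤ ∑ k ∈ Finset.range (T'.card + 1), μ P / 2 ^ k := by
        refine Finset.sum_le_sum fun k _ => ?_
        rw [Finset.filter_filter]
        exact depth_sum G hSG hSp T' hT' k
    _ ≤ ∑' k : ℕ, μ P / 2 ^ k := ENNReal.sum_le_tsum _
    _ = μ P * ∑' k : ℕ, 2⁻¹ ^ k := by
        rw [← ENNReal.tsum_mul_left]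
        congr 1; funext k
        rw [div_eq_mul_inv, ENNReal.inv_pow]
    _ = μ P * 2 := by
        rw [ENNReal.tsum_geometric, ENNReal.one_sub_inv_two, inv_inv]
    _ = 2 * μ P := mul_comm _ _

lemma exists_tops {S : Set (Set Ω)} (hSG : S ⊆ G.tree)
    (T' : Finset (Set Ω)) (hT' : ↑T' ⊆ S) :
    ∃ M : Finset (Set Ω), M ⊆ T' ∧ ((M : Set (Set Ω)).PairwiseDisjoint id) ∧
      (∀ P ∈ T', ∃ t ∈ M, P ⊆ t) := by
  refine ⟨T'.filter (fun P => ∀ Q ∈ T', P ⊆ Q → P = Q), Finset.filter_subset _ _, ?_, ?_⟩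
  · intro A hA B hB hne
    simp only [Finset.coe_filter, Set.mem_setOf_eq] at hA hB
    by_contra hnd
    rcases nested_of_not_disjoint G (hSG (hT' hA.1)) (hSG (hT' hB.1)) hnd with hs | hs
    · exact hne (hA.2 B hB.1 hs)
    · exact hne (hB.2 A hA.1 hs).symm
  · intro P hP
    obtain ⟨m, hm, hmax⟩ := Finset.exists_maximal (s := T'.filter fun Q => P ⊆ Q)
      ⟨P, Finset.mem_filter.2 ⟨hP, subset_rfl⟩⟩
    obtain ⟨hmT, hPm⟩ := Finset.mem_filter.1 hm
    refine ⟨m, Finset.mem_filter.2 ⟨hmT, fun Q hQ hmQ => ?_⟩, hPm⟩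
    by_contra hne
    exact (ssubset_of_subset_of_ne hmQ hne).not_subset (hmax (Finset.mem_filter.2 ⟨hQ, hPm.trans hmQ⟩) hmQ)

lemma sum_setLIntegral_le (t : Finset (Set Ω)) (hm : ∀ s ∈ t, MeasurableSet s)
    (hd : ((t : Set (Set Ω))).PairwiseDisjoint id) (g : Ω → ℝ≥0∞) :
    ∑ s ∈ t, ∫⁻ x in s, g x ∂μ ≤ ∫⁻ x, g x ∂μ := by
  classical
  have key : ∀ u : Finset (Set Ω), u ⊆ t →
      ∑ s ∈ u, ∫⁻ x in s, g x ∂μ ≤ ∫⁻ x in (⋃ s ∈ u, s), g x ∂μ := by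
    intro u hu
    induction u using Finset.induction_on with
    | empty => simp
    | @insert A u hA ih =>
      have huT : u ⊆ t := fun x hx => hu (Finset.mem_insert_of_mem hx)
      have hAT : A ∈ t := hu (Finset.mem_insert_self A u)
      rw [Finset.sum_insert hA]
      have hU : MeasurableSet (⋃ s ∈ u, s) :=
        Finset.measurableSet_biUnion u (fun s hs => hm s (huT hs))
      have hdisj : Disjoint A (⋃ s ∈ u, s) := by
        rw [Set.disjoint_iUnion_right]
        intro s
        rw [Set.disjoint_iUnion_right]
        intro hs
        exact hd (Finset.mem_coe.2 hAT) (Finset.mem_coe.2 (huT hs))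
          (fun h => hA (h ▸ hs))
      have : (⋃ s ∈ insert A u, s) = A ∪ ⋃ s ∈ u, s := by
        simp [Set.biUnion_insert]
      rw [this, Measure.restrict_union hdisj hU, lintegral_add_measure]
      exact add_le_add le_rfl (ih huT)
  calc ∑ s ∈ t, ∫⁻ x in s, g x ∂μ ≤ ∫⁻ x in (⋃ s ∈ t, s), g x ∂μ := key t subset_rfl
    _ ≤ ∫⁻ x, g x ∂μ := setLIntegral_le_lintegral _ _


-- ########## integral of square ##########

lemma lintegral_sq (T' : Finset (Set Ω)) (hmeas : ∀ P ∈ T', MeasurableSet P)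
    (a : Set Ω → ℝ≥0∞) :
    ∫⁻ x, (∑ P ∈ T', P.indicator (fun _ => a P) x) ^ 2 ∂μ
      = ∑ P ∈ T', ∑ Q ∈ T', a P * a Q * μ (P ∩ Q) := by
  have hpt : ∀ x, (∑ P ∈ T', P.indicator (fun _ => a P) x) ^ 2
      = ∑ P ∈ T', ∑ Q ∈ T', (P ∩ Q).indicator (fun _ => a P * a Q) x := by
    intro x
    rw [sq, Finset.sum_mul_sum]
    refine Finset.sum_congr rfl fun P _ => Finset.sum_congr rfl fun Q _ => ?_
    by_cases hP : x ∈ P <;> by_cases hQ : x ∈ Q <;>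
      simp [Set.indicator, hP, hQ, Set.mem_inter_iff]
  calc ∫⁻ x, (∑ P ∈ T', P.indicator (fun _ => a P) x) ^ 2 ∂μ
      = ∫⁻ x, ∑ P ∈ T', ∑ Q ∈ T', (P ∩ Q).indicator (fun _ => a P * a Q) x ∂μ :=
        lintegral_congr hpt
    _ = ∑ P ∈ T', ∑ Q ∈ T', a P * a Q * μ (P ∩ Q) := by
        rw [lintegral_finset_sum _ (fun P hP => Finset.measurable_sum _ fun Q hQ =>
          measurable_const.indicator ((hmeas P hP).inter (hmeas Q hQ)))]
        refine Finset.sum_congr rfl fun P hP => ?_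
        rw [lintegral_finset_sum _ (fun Q hQ =>
          measurable_const.indicator ((hmeas P hP).inter (hmeas Q hQ)))]
        refine Finset.sum_congr rfl fun Q hQ => ?_
        rw [lintegral_indicator ((hmeas P hP).inter (hmeas Q hQ)), setLIntegral_const]

-- ########## sum of measures of a class ##########

lemma sum_measure_le {S : Set (Set Ω)} (hSG : S ⊆ G.tree) (hSp : IsSparseIn μ S)
    (g : Ω → ℝ≥0∞) (T' : Finset (Set Ω)) (hT' : ↑T' ⊆ S)
    {β : ℝ≥0∞} (hβ0 : β ≠ 0) (hβt : β ≠ ∞)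
    (hlow : ∀ P ∈ T', β / 2 < (μ P)⁻¹ * ∫⁻ y in P, g y ∂μ) :
    ∑ P ∈ T', μ P ≤ 4 / β * ∫⁻ x, g x ∂μ := by
  obtain ⟨M, hMT, hMdisj, hMtop⟩ := exists_tops G hSG T' hT'
  set tf : Set Ω → Set Ω := fun P => if h : ∃ t, t ∈ M ∧ P ⊆ t then h.choose else ∅ with htf
  have htf1 : ∀ P ∈ T', tf P ∈ M ∧ P ⊆ tf P := by
    intro P hP
    obtain ⟨t, h1, h2⟩ := hMtop P hP
    have h' : ∃ t, t ∈ M ∧ P ⊆ t := ⟨t, h1, h2⟩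
    rw [htf]; simp only [dif_pos h']; exact h'.choose_spec
  have hββ : 4 / β * (β / 2) = 2 := by
    rw [div_eq_mul_inv, div_eq_mul_inv]
    calc 4 * β⁻¹ * (β * 2⁻¹) = 4 * 2⁻¹ * (β⁻¹ * β) := by ring
      _ = 4 * 2⁻¹ := by rw [ENNReal.inv_mul_cancel hβ0 hβt, mul_one]
      _ = 2 := by
          rw [show (4:ℝ≥0∞) = 2 * 2 by norm_num, mul_assoc,
            ENNReal.mul_inv_cancel (by norm_num) (by norm_num), mul_one]
  calc ∑ P ∈ T', μ P
      = ∑ t ∈ M, ∑ P ∈ T'.filter (fun P => tf P = t), μ P :=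
        (Finset.sum_fiberwise_of_maps_to (fun P hP => (htf1 P hP).1) _).symm
    _ ≤ ∑ t ∈ M, ∑ P ∈ T'.filter (· ⊆ t), μ P := by
        refine Finset.sum_le_sum fun t ht => Finset.sum_le_sum_of_subset ?_
        intro P hP
        obtain ⟨hP1, hP2⟩ := Finset.mem_filter.1 hP
        exact Finset.mem_filter.2 ⟨hP1, hP2 ▸ (htf1 P hP1).2⟩
    _ ≤ ∑ t ∈ M, 2 * μ t :=
        Finset.sum_le_sum fun t ht => sum_subsets_le G hSG hSp T' hT'
    _ ≤ ∑ t ∈ M, 4 / β * ∫⁻ y in t, g y ∂μ := by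
        refine Finset.sum_le_sum fun t ht => ?_
        have htS : t ∈ S := hT' (hMT ht)
        have hμt0 : μ t ≠ 0 := (tree_pos G (hSG htS)).ne'
        have hμtt : μ t ≠ ∞ := tree_ne_top G (hSG htS)
        have h2 : β / 2 * μ t ≤ ∫⁻ y in t, g y ∂μ := by
          calc β / 2 * μ t ≤ ((μ t)⁻¹ * ∫⁻ y in t, g y ∂μ) * μ t :=
                mul_le_mul_left (hlow t (hMT ht)).le _
            _ = ∫⁻ y in t, g y ∂μ := by
                rw [mul_comm ((μ t)⁻¹) _, mul_assoc, ENNReal.inv_mul_cancel hμt0 hμtt, mul_one]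
        calc 2 * μ t = 4 / β * (β / 2 * μ t) := by rw [← mul_assoc, hββ]
          _ ≤ 4 / β * ∫⁻ y in t, g y ∂μ := mul_le_mul_right h2 _
    _ = 4 / β * ∑ t ∈ M, ∫⁻ y in t, g y ∂μ := (Finset.mul_sum _ _ _).symm
    _ ≤ 4 / β * ∫⁻ x, g x ∂μ := mul_le_mul_right
        (sum_setLIntegral_le (μ := μ) M
          (fun s hs => tree_measurableSet G (hSG (hT' (hMT hs)))) hMdisj g) _

-- ########## Chebyshev class bound ##########

lemma class_bound {S : Set (Set Ω)} (hSG : S ⊆ G.tree) (hSp : IsSparseIn μ S)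
    (g : Ω → ℝ≥0∞) (T' : Finset (Set Ω)) (hT' : ↑T' ⊆ S)
    {β : ℝ≥0∞} (hβ0 : β ≠ 0) (hβt : β ≠ ∞)
    (hup : ∀ P ∈ T', (μ P)⁻¹ * ∫⁻ y in P, g y ∂μ ≤ β)
    (hlow : ∀ P ∈ T', β / 2 < (μ P)⁻¹ * ∫⁻ y in P, g y ∂μ)
    (ε : ℝ≥0∞) :
    ε ^ 2 * μ {x | ε < ∑ P ∈ T', P.indicator
        (fun _ => (μ P)⁻¹ * ∫⁻ y in P, g y ∂μ) x}
      ≤ 16 * β * ∫⁻ x, g x ∂μ := by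
  set a : Set Ω → ℝ≥0∞ := fun P => (μ P)⁻¹ * ∫⁻ y in P, g y ∂μ with ha
  have hmeas : ∀ P ∈ T', MeasurableSet P := fun P hP => tree_measurableSet G (hSG (hT' hP))
  have hFmeas : Measurable fun x => ∑ P ∈ T', P.indicator (fun _ => a P) x :=
    Finset.measurable_sum _ fun P hP => measurable_const.indicator (hmeas P hP)
  have hcancel : β * β⁻¹ = 1 := ENNReal.mul_inv_cancel hβ0 hβt
  have cheb : ε ^ 2 * μ {x | ε < ∑ P ∈ T', P.indicator (fun _ => a P) x}
      ≤ ∫⁻ x, (∑ P ∈ T', P.indicator (fun _ => a P) x) ^ 2 ∂μ := by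
    refine le_trans ?_ (mul_meas_ge_le_lintegral₀ ((hFmeas.pow_const 2).aemeasurable) (ε ^ 2))
    refine mul_le_mul_right (measure_mono ?_) _
    intro x hx
    simp only [Set.mem_setOf_eq] at hx ⊢
    exact pow_le_pow_left₀ zero_le hx.le 2
  have hONE : (∑ P ∈ T', ∑ Q ∈ T', if Q ⊆ P then a P * a Q * μ Q else 0)
      ≤ 8 * β * ∫⁻ x, g x ∂μ := by
    have step1 : ∀ P ∈ T', (∑ Q ∈ T', if Q ⊆ P then a P * a Q * μ Q else 0)
        ≤ 2 * β * (β * μ P) := by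
      intro P hP
      rw [← Finset.sum_filter]
      calc ∑ Q ∈ T'.filter (· ⊆ P), a P * a Q * μ Q
          ≤ ∑ Q ∈ T'.filter (· ⊆ P), a P * β * μ Q := by
            refine Finset.sum_le_sum fun Q hQ => ?_
            exact mul_le_mul_left (mul_le_mul_right
              (hup Q (Finset.mem_filter.1 hQ).1) _) _
        _ = a P * β * ∑ Q ∈ T'.filter (· ⊆ P), μ Q := (Finset.mul_sum _ _ _).symm
        _ ≤ a P * β * (2 * μ P) :=
            mul_le_mul_right (sum_subsets_le G hSG hSp T' hT') _
        _ ≤ β * β * (2 * μ P) :=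
            mul_le_mul_left (mul_le_mul_left (hup P hP) _) _
        _ = 2 * β * (β * μ P) := by ring
    calc (∑ P ∈ T', ∑ Q ∈ T', if Q ⊆ P then a P * a Q * μ Q else 0)
        ≤ ∑ P ∈ T', 2 * β * (β * μ P) := Finset.sum_le_sum step1
      _ = ∑ P ∈ T', 2 * β * β * μ P := Finset.sum_congr rfl fun P _ => by ring
      _ = 2 * β * β * ∑ P ∈ T', μ P := (Finset.mul_sum _ _ _).symm
      _ ≤ 2 * β * β * (4 / β * ∫⁻ x, g x ∂μ) :=
          mul_le_mul_right (sum_measure_le G hSG hSp g T' hT' hβ0 hβt hlow) _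
      _ = 8 * β * ∫⁻ x, g x ∂μ := by
          rw [div_eq_mul_inv]
          calc 2 * β * β * (4 * β⁻¹ * ∫⁻ x, g x ∂μ)
              = 8 * β * (∫⁻ x, g x ∂μ) * (β * β⁻¹) := by ring
            _ = 8 * β * ∫⁻ x, g x ∂μ := by rw [hcancel, mul_one]
  have hTWO : (∑ P ∈ T', ∑ Q ∈ T', if P ⊆ Q then a P * a Q * μ P else 0)
      ≤ 8 * β * ∫⁻ x, g x ∂μ := by
    rw [Finset.sum_comm]
    calc (∑ Q ∈ T', ∑ P ∈ T', if P ⊆ Q then a P * a Q * μ P else 0)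
        = ∑ Q ∈ T', ∑ P ∈ T', (if P ⊆ Q then a Q * a P * μ P else 0) :=
          Finset.sum_congr rfl fun Q _ => Finset.sum_congr rfl fun P _ => by
            rw [mul_comm (a P) (a Q)]
      _ ≤ 8 * β * ∫⁻ x, g x ∂μ := hONE
  refine cheb.trans ?_
  rw [lintegral_sq T' hmeas a]
  calc ∑ P ∈ T', ∑ Q ∈ T', a P * a Q * μ (P ∩ Q)
      ≤ ∑ P ∈ T', ∑ Q ∈ T', ((if Q ⊆ P then a P * a Q * μ Q else 0)
          + (if P ⊆ Q then a P * a Q * μ P else 0)) := by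
        refine Finset.sum_le_sum fun P hP => Finset.sum_le_sum fun Q hQ => ?_
        by_cases hd : Disjoint P Q
        · rw [Set.disjoint_iff_inter_eq_empty.1 hd, measure_empty, mul_zero]
          exact zero_le
        · rcases nested_of_not_disjoint G (hSG (hT' hP)) (hSG (hT' hQ)) hd with hs | hs
          · rw [Set.inter_eq_self_of_subset_left hs]
            refine le_trans (le_of_eq ?_) le_add_self
            rw [if_pos hs]
          · rw [Set.inter_eq_self_of_subset_right hs]
            refine le_trans (le_of_eq ?_) le_self_add
            rw [if_pos hs]
    _ = (∑ P ∈ T', ∑ Q ∈ T', if Q ⊆ P then a P * a Q * μ Q else 0)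
        + (∑ P ∈ T', ∑ Q ∈ T', if P ⊆ Q then a P * a Q * μ P else 0) := by
        rw [← Finset.sum_add_distrib]
        exact Finset.sum_congr rfl fun P _ => Finset.sum_add_distrib
    _ ≤ 8 * β * ∫⁻ x, g x ∂μ + 8 * β * ∫⁻ x, g x ∂μ := add_le_add hONE hTWO
    _ = 16 * β * ∫⁻ x, g x ∂μ := by rw [← add_mul, ← add_mul]; norm_num

-- ########## big-average part ##########

lemma big_bound {S : Set (Set Ω)} (hSG : S ⊆ G.tree)
    (g : Ω → ℝ≥0∞) (T' : Finset (Set Ω)) (hT' : ↑T' ⊆ S)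
    {L : ℝ≥0∞} (hbig : ∀ P ∈ T', L / 2 < (μ P)⁻¹ * ∫⁻ y in P, g y ∂μ) :
    L * μ (⋃ P ∈ T', P) ≤ 2 * ∫⁻ x, g x ∂μ := by
  obtain ⟨M, hMT, hMdisj, hMtop⟩ := exists_tops G hSG T' hT'
  have h1 : μ (⋃ P ∈ T', P) ≤ ∑ t ∈ M, μ t := by
    refine le_trans (measure_mono ?_) (measure_biUnion_finset_le M _)
    intro x hx
    simp only [Set.mem_iUnion] at hx ⊢
    obtain ⟨P, hP, hxP⟩ := hx
    obtain ⟨t, ht, hPt⟩ := hMtop P hP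
    exact ⟨t, ht, hPt hxP⟩
  calc L * μ (⋃ P ∈ T', P) ≤ L * ∑ t ∈ M, μ t := mul_le_mul_right h1 L
    _ = ∑ t ∈ M, L * μ t := Finset.mul_sum _ _ _
    _ ≤ ∑ t ∈ M, 2 * ∫⁻ y in t, g y ∂μ := by
        refine Finset.sum_le_sum fun t ht => ?_
        have htS : t ∈ S := hT' (hMT ht)
        have hμt0 : μ t ≠ 0 := (tree_pos G (hSG htS)).ne'
        have hμtt : μ t ≠ ∞ := tree_ne_top G (hSG htS)
        have h2 : L / 2 * μ t ≤ ∫⁻ y in t, g y ∂μ := by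
          calc L / 2 * μ t ≤ ((μ t)⁻¹ * ∫⁻ y in t, g y ∂μ) * μ t :=
                mul_le_mul_left (hbig t (hMT ht)).le _
            _ = ∫⁻ y in t, g y ∂μ := by
                rw [mul_comm ((μ t)⁻¹) _, mul_assoc, ENNReal.inv_mul_cancel hμt0 hμtt, mul_one]
        calc L * μ t = 2 * (L / 2) * μ t := by
              rw [ENNReal.mul_div_cancel' (by norm_num) (by norm_num)]
          _ = 2 * (L / 2 * μ t) := by rw [mul_assoc]
          _ ≤ 2 * ∫⁻ y in t, g y ∂μ := mul_le_mul_right h2 _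
    _ = 2 * ∑ t ∈ M, ∫⁻ y in t, g y ∂μ := (Finset.mul_sum _ _ _).symm
    _ ≤ 2 * ∫⁻ x, g x ∂μ := mul_le_mul_right
        (sum_setLIntegral_le (μ := μ) M
          (fun s hs => tree_measurableSet G (hSG (hT' (hMT hs)))) hMdisj g) _


-- ########## numerics ##########

lemma tsum_c : ∑' m : ℕ, ((3:ℝ≥0∞)/4) ^ m * 4⁻¹ = 1 := by
  rw [ENNReal.tsum_mul_right, ENNReal.tsum_geometric]
  have h1 : (1:ℝ≥0∞) = 4⁻¹ + 3/4 := by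
    rw [← one_div, ENNReal.div_add_div_same, show (1:ℝ≥0∞) + 3 = 4 by norm_num,
      ENNReal.div_self (by norm_num) (by norm_num)]
  rw [ENNReal.sub_eq_of_eq_add (ENNReal.div_lt_top (by norm_num) (by norm_num)).ne h1, inv_inv]
  exact ENNReal.mul_inv_cancel (by norm_num) (by norm_num)

lemma tsum_89 : ∑' m : ℕ, ((8:ℝ≥0∞)/9) ^ m = 9 := by
  rw [ENNReal.tsum_geometric]
  have h1 : (1:ℝ≥0∞) = 9⁻¹ + 8/9 := by
    rw [← one_div, ENNReal.div_add_div_same, show (1:ℝ≥0∞) + 8 = 9 by norm_num,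
      ENNReal.div_self (by norm_num) (by norm_num)]
  rw [ENNReal.sub_eq_of_eq_add (ENNReal.div_lt_top (by norm_num) (by norm_num)).ne h1, inv_inv]

lemma coeff_calc {L : ℝ≥0∞} (hL0 : L ≠ 0) (hLt : L ≠ ∞) (m : ℕ) :
    L * ((((3:ℝ≥0∞)/4) ^ m * 4⁻¹ * L) ^ 2)⁻¹ * (16 * (L / 2 ^ (m + 1)))
      = 128 * ((8:ℝ≥0∞)/9) ^ m := by
  have h34t : ((3:ℝ≥0∞)/4) ≠ ∞ := (ENNReal.div_lt_top (by norm_num) (by norm_num)).ne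
  have h340 : ((3:ℝ≥0∞)/4) ≠ 0 := by simp [ENNReal.div_eq_zero_iff]
  set c : ℝ≥0∞ := ((3:ℝ≥0∞)/4) ^ m * 4⁻¹ with hc
  have hc0 : c ≠ 0 := mul_ne_zero (pow_ne_zero m h340) (by simp)
  have hct : c ≠ ∞ := ENNReal.mul_ne_top (ENNReal.pow_ne_top h34t) (by simp)
  have h1 : ((c * L) ^ 2)⁻¹ = (c ^ 2)⁻¹ * (L ^ 2)⁻¹ := by
    rw [mul_pow, ENNReal.mul_inv (Or.inl (pow_ne_zero 2 hc0)) (Or.inl (ENNReal.pow_ne_top hct))]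
  have hLL : L * (L ^ 2)⁻¹ * L = 1 := by
    calc L * (L ^ 2)⁻¹ * L = L ^ 2 * (L ^ 2)⁻¹ := by ring
      _ = 1 := ENNReal.mul_inv_cancel (pow_ne_zero 2 hL0) (ENNReal.pow_ne_top hLt)
  have main : L * ((c * L) ^ 2)⁻¹ * (16 * (L / 2 ^ (m + 1)))
      = 16 * (c ^ 2)⁻¹ * ((2:ℝ≥0∞) ^ (m + 1))⁻¹ * (L * (L ^ 2)⁻¹ * L) := by
    rw [h1, div_eq_mul_inv]; ring
  rw [main, hLL, mul_one]
  have hcinv : (c ^ 2)⁻¹ = (((4:ℝ≥0∞)/3) ^ m * 4) ^ 2 := by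
    rw [ENNReal.inv_pow]
    congr 1
    rw [hc, ENNReal.mul_inv (Or.inl (pow_ne_zero m h340)) (Or.inl (ENNReal.pow_ne_top h34t)),
      ENNReal.inv_pow, inv_inv, ENNReal.inv_div (Or.inr (by norm_num)) (Or.inr (by norm_num))]
  rw [hcinv]
  have hB : ((4:ℝ≥0∞)/3) ^ 2 * 2⁻¹ = 8/9 := by
    rw [div_eq_mul_inv, mul_pow, ← ENNReal.inv_pow,
      show ((4:ℝ≥0∞) ^ 2) = 8 * 2 by norm_num, show ((3:ℝ≥0∞) ^ 2) = 9 by norm_num]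
    calc (8:ℝ≥0∞) * 2 * 9⁻¹ * 2⁻¹ = 8 * 9⁻¹ * (2 * 2⁻¹) := by ring
      _ = 8 * 9⁻¹ := by rw [ENNReal.mul_inv_cancel (by norm_num) (by norm_num), mul_one]
      _ = 8 / 9 := (div_eq_mul_inv _ _).symm
  have hA : (16:ℝ≥0∞) * 16 * 2⁻¹ = 128 := by
    rw [show ((16:ℝ≥0∞) * 16) = 128 * 2 by norm_num, mul_assoc,
      ENNReal.mul_inv_cancel (by norm_num) (by norm_num), mul_one]
  calc 16 * (((4:ℝ≥0∞)/3) ^ m * 4) ^ 2 * ((2:ℝ≥0∞) ^ (m + 1))⁻¹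
      = 16 * ((((4:ℝ≥0∞)/3) ^ 2) ^ m * 16) * (2⁻¹ ^ m * 2⁻¹) := by
        rw [mul_pow, pow_right_comm, show ((4:ℝ≥0∞) ^ 2) = 16 by norm_num,
          ENNReal.inv_pow, pow_succ (2⁻¹:ℝ≥0∞) m]
    _ = (16 * 16 * 2⁻¹) * ((((4:ℝ≥0∞)/3) ^ 2 * 2⁻¹) ^ m) := by
        rw [mul_pow]; ring
    _ = 128 * ((8:ℝ≥0∞)/9) ^ m := by rw [hA, hB]

-- ########## finite case ##########

lemma finite_case (G : MartingaleGrid Ω μ) {S : Set (Set Ω)} (hSG : S ⊆ G.tree)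
    (hSp : IsSparseIn μ S) (g : Ω → ℝ≥0∞) (T : Finset (Set Ω)) (hT : ↑T ⊆ S)
    {L : ℝ≥0∞} (hL0 : L ≠ 0) (hLt : L ≠ ∞) :
    L * μ {x | L < ∑ P ∈ T, P.indicator
        (fun _ => (μ P)⁻¹ * ∫⁻ y in P, g y ∂μ) x}
      ≤ 2048 * ∫⁻ x, g x ∂μ := by
  set a : Set Ω → ℝ≥0∞ := fun P => (μ P)⁻¹ * ∫⁻ y in P, g y ∂μ with ha
  set mdx : Set Ω → ℕ := fun P => sInf {m : ℕ | L / 2 ^ (m + 2) < a P} with hmdx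
  set Big : Finset (Set Ω) := T.filter (fun P => L / 2 < a P) with hBig
  set Tm : ℕ → Finset (Set Ω) := fun m =>
    T.filter (fun P => ¬ (L / 2 < a P) ∧ a P ≠ 0 ∧ mdx P = m) with hTm
  set c : ℕ → ℝ≥0∞ := fun m => ((3:ℝ≥0∞)/4) ^ m * 4⁻¹ with hc
  have hc0 : ∀ m, c m ≠ 0 := fun m => mul_ne_zero
    (pow_ne_zero m (by simp [ENNReal.div_eq_zero_iff])) (by simp)
  have hct : ∀ m, c m ≠ ∞ := fun m => ENNReal.mul_ne_top
    (ENNReal.pow_ne_top (ENNReal.div_lt_top (by norm_num) (by norm_num)).ne) (by simp)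
  -- index facts
  have hmdx_spec : ∀ P ∈ T, ¬ (L / 2 < a P) → a P ≠ 0 →
      L / 2 ^ (mdx P + 2) < a P ∧ a P ≤ L / 2 ^ (mdx P + 1) := by
    intro P hP hPb hP0
    have hne : {m : ℕ | L / 2 ^ (m + 2) < a P}.Nonempty := by
      have htend : Filter.Tendsto (fun n : ℕ => L * 2⁻¹ ^ n) Filter.atTop (nhds 0) := by
        have := ENNReal.tendsto_pow_atTop_nhds_zero_of_lt_one
          (show (2⁻¹ : ℝ≥0∞) < 1 by simp [ENNReal.inv_lt_one])
        simpa using ENNReal.Tendsto.const_mul this (Or.inr hLt)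
      obtain ⟨n, hn⟩ := (htend.eventually_lt_const
        (pos_iff_ne_zero.mpr hP0 : (0:ℝ≥0∞) < a P)).exists
      refine ⟨n, lt_of_le_of_lt ?_ hn⟩
      rw [div_eq_mul_inv, ENNReal.inv_pow]
      refine mul_le_mul_right ?_ L
      rw [pow_add]
      refine le_trans (mul_le_mul_right ?_ _) (le_of_eq (mul_one _))
      rw [sq]
      exact mul_le_one' (ENNReal.inv_le_one.2 one_le_two) (ENNReal.inv_le_one.2 one_le_two)
    refine ⟨Nat.sInf_mem hne, ?_⟩
    rcases Nat.eq_zero_or_pos (mdx P) with h0 | hpos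
    · rw [h0]
      rw [not_lt] at hPb
      simpa using hPb
    · have hnotmem : mdx P - 1 ∉ {m : ℕ | L / 2 ^ (m + 2) < a P} :=
        Nat.notMem_of_lt_sInf (Nat.sub_lt hpos Nat.one_pos)
      rw [Set.mem_setOf_eq, not_lt] at hnotmem
      have : mdx P - 1 + 2 = mdx P + 1 := by omega
      rwa [this] at hnotmem
  -- beta facts
  have two_pow_ne_top : ∀ k : ℕ, ((2:ℝ≥0∞) ^ k) ≠ ∞ :=
    fun k => ENNReal.pow_ne_top ENNReal.ofNat_ne_top
  have two_pow_ne_zero : ∀ k : ℕ, ((2:ℝ≥0∞) ^ k) ≠ 0 :=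
    fun k => pow_ne_zero k (by norm_num : (2:ℝ≥0∞) ≠ 0)
  have hβ0 : ∀ m : ℕ, L / 2 ^ (m+1) ≠ 0 := by
    intro m
    simp only [ne_eq, ENNReal.div_eq_zero_iff, not_or]
    exact ⟨hL0, two_pow_ne_top (m+1)⟩
  have hβt : ∀ m : ℕ, L / 2 ^ (m+1) ≠ ∞ :=
    fun m => (ENNReal.div_lt_top hLt (two_pow_ne_zero (m+1))).ne
  have hβhalf : ∀ m : ℕ, L / 2 ^ (m+1) / 2 = L / 2 ^ (m+2) := by
    intro m
    rw [div_eq_mul_inv, div_eq_mul_inv, div_eq_mul_inv, mul_assoc]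
    congr 1
    rw [← ENNReal.mul_inv (Or.inl (pow_ne_zero _ (by norm_num : (2:ℝ≥0∞) ≠ 0)))
      (Or.inl (ENNReal.pow_ne_top ENNReal.ofNat_ne_top)), ← pow_succ]
  -- the inclusion
  have hincl : {x | L < ∑ P ∈ T, P.indicator (fun _ => a P) x}
      ⊆ (⋃ P ∈ Big, (P : Set Ω)) ∪
        ⋃ m : ℕ, {x | c m * L < ∑ P ∈ Tm m, P.indicator (fun _ => a P) x} := by
    intro x hx
    by_contra hcon
    rw [Set.mem_union] at hcon
    push_neg at hcon
    obtain ⟨hxB, hxM⟩ := hcon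
    simp only [Set.mem_iUnion, exists_prop, not_exists, not_and] at hxB
    simp only [Set.mem_iUnion, Set.mem_setOf_eq, not_exists, not_lt] at hxM
    have hxB' : ∀ P ∈ Big, x ∉ P := fun P hP => hxB P hP
    have hxM' : ∀ m, (∑ P ∈ Tm m, P.indicator (fun _ => a P) x) ≤ c m * L := fun m => hxM m
    have hle : (∑ P ∈ T, P.indicator (fun _ => a P) x) ≤ L := by
      rw [← Finset.sum_filter_add_sum_filter_not T (fun P => L / 2 < a P)]
      have h1 : (∑ P ∈ T.filter (fun P => L / 2 < a P), P.indicator (fun _ => a P) x) = 0 :=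
        Finset.sum_eq_zero fun P hP => Set.indicator_of_notMem (hxB' P hP) _
      rw [h1, zero_add]
      set T2 : Finset (Set Ω) := T.filter (fun P => ¬ (L / 2 < a P)) with hT2
      rw [← Finset.sum_filter_add_sum_filter_not T2 (fun P => a P = 0)]
      have h2 : (∑ P ∈ T2.filter (fun P => a P = 0), P.indicator (fun _ => a P) x) = 0 := by
        refine Finset.sum_eq_zero fun P hP => ?_
        have := (Finset.mem_filter.1 hP).2
        simp [Set.indicator_apply, this]
      rw [h2, zero_add]
      set T3 : Finset (Set Ω) := T2.filter (fun P => ¬ a P = 0) with hT3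
      have hfib : (∑ P ∈ T3, P.indicator (fun _ => a P) x)
          = ∑ m ∈ T3.image mdx, ∑ P ∈ T3.filter (fun P => mdx P = m),
              P.indicator (fun _ => a P) x :=
        (Finset.sum_fiberwise_of_maps_to (fun P hP => Finset.mem_image_of_mem mdx hP) _).symm
      have hTm_eq : ∀ m, T3.filter (fun P => mdx P = m) = Tm m := by
        intro m
        ext P
        simp only [hT3, hT2, hTm, Finset.mem_filter, and_assoc]
      rw [hfib]
      calc (∑ m ∈ T3.image mdx, ∑ P ∈ T3.filter (fun P => mdx P = m),
              P.indicator (fun _ => a P) x)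
          ≤ ∑ m ∈ T3.image mdx, c m * L := by
            refine Finset.sum_le_sum fun m _ => ?_
            rw [hTm_eq m]
            exact hxM' m
        _ ≤ ∑' m : ℕ, c m * L := ENNReal.sum_le_tsum _
        _ = (∑' m : ℕ, c m) * L := ENNReal.tsum_mul_right
        _ = L := by rw [hc]; rw [tsum_c, one_mul]
    exact absurd hx (by simp only [Set.mem_setOf_eq, not_lt]; exact hle)
  -- big part
  have hbig' : L * μ (⋃ P ∈ Big, (P : Set Ω)) ≤ 2 * ∫⁻ x, g x ∂μ := by
    refine big_bound G hSG g Big ?_ ?_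
    · intro P hP
      exact hT (Finset.mem_coe.1 (Finset.coe_subset.2 (Finset.filter_subset _ _) hP))
    · intro P hP
      exact (Finset.mem_filter.1 hP).2
  -- small classes
  have hsmall : ∀ m : ℕ,
      L * μ {x | c m * L < ∑ P ∈ Tm m, P.indicator (fun _ => a P) x}
        ≤ 128 * ((8:ℝ≥0∞)/9) ^ m * ∫⁻ x, g x ∂μ := by
    intro m
    have hTmS : ↑(Tm m) ⊆ S := fun P hP =>
      hT (Finset.mem_coe.2 (Finset.filter_subset _ _ (Finset.mem_coe.1 hP)))
    have hup : ∀ P ∈ Tm m, a P ≤ L / 2 ^ (m+1) := by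
      intro P hP
      have hmem := Finset.mem_filter.1 hP
      have := (hmdx_spec P hmem.1 hmem.2.1 hmem.2.2.1).2
      rwa [hmem.2.2.2] at this
    have hlow : ∀ P ∈ Tm m, L / 2 ^ (m+1) / 2 < a P := by
      intro P hP
      have hmem := Finset.mem_filter.1 hP
      rw [hβhalf m]
      have := (hmdx_spec P hmem.1 hmem.2.1 hmem.2.2.1).1
      rwa [hmem.2.2.2] at this
    have hcb := class_bound G hSG hSp g (Tm m) hTmS (hβ0 m) (hβt m) hup hlow (c m * L)
    have hK0 : ((c m * L) ^ 2) ≠ 0 := pow_ne_zero 2 (mul_ne_zero (hc0 m) hL0)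
    have hKt : ((c m * L) ^ 2) ≠ ∞ :=
      ENNReal.pow_ne_top (ENNReal.mul_ne_top (hct m) hLt)
    set E := {x | c m * L < ∑ P ∈ Tm m, P.indicator (fun _ => a P) x} with hE
    calc L * μ E
        = (L * ((c m * L) ^ 2)⁻¹) * ((c m * L) ^ 2 * μ E) := by
          rw [mul_assoc, ← mul_assoc (((c m * L) ^ 2)⁻¹),
            ENNReal.inv_mul_cancel hK0 hKt, one_mul]
      _ ≤ (L * ((c m * L) ^ 2)⁻¹) * (16 * (L / 2 ^ (m+1)) * ∫⁻ x, g x ∂μ) :=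
          mul_le_mul_right hcb _
      _ = (L * ((c m * L) ^ 2)⁻¹ * (16 * (L / 2 ^ (m+1)))) * ∫⁻ x, g x ∂μ :=
          (mul_assoc _ _ _).symm
      _ = 128 * ((8:ℝ≥0∞)/9) ^ m * ∫⁻ x, g x ∂μ := by
          rw [hc, coeff_calc hL0 hLt m]
  -- assemble
  calc L * μ {x | L < ∑ P ∈ T, P.indicator (fun _ => a P) x}
      ≤ L * (μ (⋃ P ∈ Big, (P : Set Ω)) +
          ∑' m : ℕ, μ {x | c m * L < ∑ P ∈ Tm m, P.indicator (fun _ => a P) x}) := by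
        refine mul_le_mul_right ((measure_mono hincl).trans ?_) L
        refine (measure_union_le _ _).trans (add_le_add le_rfl (measure_iUnion_le _))
    _ = L * μ (⋃ P ∈ Big, (P : Set Ω)) +
          ∑' m : ℕ, L * μ {x | c m * L < ∑ P ∈ Tm m, P.indicator (fun _ => a P) x} := by
        rw [mul_add, ENNReal.tsum_mul_left]
    _ ≤ 2 * ∫⁻ x, g x ∂μ + ∑' m : ℕ, 128 * ((8:ℝ≥0∞)/9) ^ m * ∫⁻ x, g x ∂μ :=
        add_le_add hbig' (ENNReal.tsum_le_tsum hsmall)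
    _ = 2 * ∫⁻ x, g x ∂μ + 128 * 9 * ∫⁻ x, g x ∂μ := by
        congr 1
        calc ∑' m : ℕ, 128 * ((8:ℝ≥0∞)/9) ^ m * ∫⁻ x, g x ∂μ
            = ∑' m : ℕ, 128 * (∫⁻ x, g x ∂μ) * ((8:ℝ≥0∞)/9) ^ m :=
              tsum_congr fun m => by ring
          _ = 128 * (∫⁻ x, g x ∂μ) * ∑' m : ℕ, ((8:ℝ≥0∞)/9) ^ m := ENNReal.tsum_mul_left
          _ = 128 * 9 * ∫⁻ x, g x ∂μ := by rw [tsum_89]; ring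
    _ ≤ 2048 * ∫⁻ x, g x ∂μ := by
        rw [← add_mul]
        exact mul_le_mul_left (by norm_num) _

end SparseWeak11Aux


/-- Sparse operators on a filtered measure space satisfy the weak (1,1) bound
with an absolute constant. -/
theorem sparseOp_weak11 :
    ∃ C : ENNReal, 0 < C ∧ C ≠ ⊤ ∧
      ∀ (Ω : Type) (_ : MeasurableSpace Ω) (μ : Measure Ω), SigmaFinite μ →
        ∀ (G : MartingaleGrid Ω μ) (S : Set (Set Ω)), S ⊆ G.tree → IsSparseIn μ S →
          ∀ f : Ω → ℝ, Integrable f μ → 0 ≤ f →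
            ∀ lam : ℝ, 0 < lam →
              ENNReal.ofReal lam *
                  μ {x | ENNReal.ofReal lam <
                      ∑' P : S, Set.indicator (P : Set Ω)
                        (fun _ => ENNReal.ofReal (⨍ y in (P : Set Ω), f y ∂μ)) x}
                ≤ C * ∫⁻ x, ENNReal.ofReal (f x) ∂μ := by
  classical
  refine ⟨2048, by norm_num, by norm_num, ?_⟩
  intro Ω mΩ μ _ G S hSG hSp f hf hf0 lam hlam
  have hL0 : ENNReal.ofReal lam ≠ 0 := (ENNReal.ofReal_pos.2 hlam).ne'
  have hLt : ENNReal.ofReal lam ≠ ∞ := ENNReal.ofReal_ne_top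
  have hterm : ∀ P : Set Ω, P ∈ S →
      ENNReal.ofReal (⨍ y in P, f y ∂μ)
        = (μ P)⁻¹ * ∫⁻ y in P, ENNReal.ofReal (f y) ∂μ := by
    intro P hP
    have hμ0 : μ P ≠ 0 := (SparseWeak11Aux.tree_pos G (hSG hP)).ne'
    have hμt : μ P ≠ ∞ := SparseWeak11Aux.tree_ne_top G (hSG hP)
    rw [setAverage_eq, smul_eq_mul, measureReal_def,
      ENNReal.ofReal_mul (inv_nonneg.2 ENNReal.toReal_nonneg),
      ENNReal.ofReal_inv_of_pos (ENNReal.toReal_pos hμ0 hμt), ENNReal.ofReal_toReal hμt,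
      ofReal_integral_eq_lintegral_ofReal hf.restrict
        (Filter.Eventually.of_forall fun x => hf0 x)]
  have hsum : ∀ x : Ω,
      (∑' P : S, Set.indicator (P : Set Ω)
        (fun _ => ENNReal.ofReal (⨍ y in (P : Set Ω), f y ∂μ)) x)
      = ⨆ T : Finset S, ∑ P ∈ T, Set.indicator (P : Set Ω)
          (fun _ => (μ (P : Set Ω))⁻¹ * ∫⁻ y in (P : Set Ω), ENNReal.ofReal (f y) ∂μ) x := by
    intro x
    rw [ENNReal.tsum_eq_iSup_sum]
    refine iSup_congr fun T => Finset.sum_congr rfl fun P _ => by rw [hterm ↑P P.2]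
  have hset : {x : Ω | ENNReal.ofReal lam < ∑' P : S, Set.indicator (P : Set Ω)
        (fun _ => ENNReal.ofReal (⨍ y in (P : Set Ω), f y ∂μ)) x}
      = ⋃ T : Finset S, {x : Ω | ENNReal.ofReal lam <
          ∑ P ∈ T, Set.indicator (P : Set Ω)
            (fun _ => (μ (P : Set Ω))⁻¹ * ∫⁻ y in (P : Set Ω), ENNReal.ofReal (f y) ∂μ) x} := by
    ext x
    simp only [Set.mem_setOf_eq, Set.mem_iUnion, hsum x, lt_iSup_iff]
  rw [hset]
  have hcnt : S.Countable := (Set.countable_iUnion G.countable).mono hSG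
  have : Countable ↥S := hcnt.to_subtype
  have hdir : Directed (· ⊆ ·) (fun T : Finset S => {x : Ω | ENNReal.ofReal lam <
      ∑ P ∈ T, Set.indicator (P : Set Ω)
        (fun _ => (μ (P : Set Ω))⁻¹ * ∫⁻ y in (P : Set Ω), ENNReal.ofReal (f y) ∂μ) x}) := by
    intro T1 T2
    refine ⟨T1 ∪ T2, fun x hx => ?_, fun x hx => ?_⟩ <;>
    · rw [Set.mem_setOf_eq] at hx ⊢
      refine lt_of_lt_of_le hx (Finset.sum_le_sum_of_subset ?_)
      intro i hi
      rw [Finset.mem_union]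
      tauto
  rw [hdir.measure_iUnion, ENNReal.mul_iSup]
  refine iSup_le fun T => ?_
  have himg : {x : Ω | ENNReal.ofReal lam < ∑ P ∈ T, Set.indicator (P : Set Ω)
        (fun _ => (μ (P : Set Ω))⁻¹ * ∫⁻ y in (P : Set Ω), ENNReal.ofReal (f y) ∂μ) x}
      = {x : Ω | ENNReal.ofReal lam < ∑ P ∈ T.image Subtype.val, Set.indicator P
        (fun _ => (μ P)⁻¹ * ∫⁻ y in P, ENNReal.ofReal (f y) ∂μ) x} := by
    ext x
    rw [Set.mem_setOf_eq, Set.mem_setOf_eq,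
      Finset.sum_image (fun a _ b _ h => Subtype.ext h)]
  rw [himg]
  have hTsub : ↑(T.image Subtype.val) ⊆ S := by
    intro P hP
    simp only [Finset.coe_image, Set.mem_image, Finset.mem_coe] at hP
    obtain ⟨Q, -, rfl⟩ := hP
    exact Q.2
  exact SparseWeak11Aux.finite_case G hSG hSp (fun x => ENNReal.ofReal (f x))
    (T.image Subtype.val) hTsub hL0 hLt
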